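/- Suppose ẑ ∈ ℝ^N satisfies the decomposition λ ẑ_{S^c} = W_{S^c} − R_{S^c} − A (W_S − R_S) + λ A ẑ_S, where A is a matrix with ‖A‖_∞ ≤ 1 − α for some α ∈ (0,1], ‖ẑ_S‖_∞ ≤ 1, ‖W‖_∞/λ ≤ α/(4(2−α)), and ‖R‖_∞/λ ≤ α/(4(2−α)). Then ‖ẑ_{S^c}‖_∞ ≤ 1 − α/2 < 1. -/

import Mathlib

open Matrix

/-- Matrix ℓ∞ operator norm: maximum absolute row sum. -/
noncomputable def linftyNorm {l m : ℕ} (M : Matrix (Fin l) (Fin m) ℝ) : ℝ :=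
  ⨆ j, ∑ k, |M j k|

lemma mulVec_abs_le {l m : ℕ} (A : Matrix (Fin l) (Fin m) ℝ) (v : Fin m → ℝ)
    (c : ℝ) (hc : 0 ≤ c) (hv : ∀ k, |v k| ≤ c) (j : Fin l) :
    |A.mulVec v j| ≤ (∑ k, |A j k|) * c := by
  calc |A.mulVec v j| = |∑ k, A j k * v k| := rfl
    _ ≤ ∑ k, |A j k * v k| := Finset.abs_sum_le_sum_abs _ _
    _ ≤ ∑ k, |A j k| * c := by
        refine Finset.sum_le_sum fun k _ => ?_
        rw [abs_mul]
        exact mul_le_mul_of_nonneg_left (hv k) (abs_nonneg _)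
    _ = (∑ k, |A j k|) * c := by rw [Finset.sum_mul]

/-- strict dual feasibility: if
`λ ẑ_{Sᶜ} = W_{Sᶜ} − R_{Sᶜ} − A (W_S − R_S) + λ A ẑ_S` with `‖A‖_∞ ≤ 1 − α`,
`‖ẑ_S‖_∞ ≤ 1`, `‖W‖_∞/λ ≤ α/(4(2−α))` and `‖R‖_∞/λ ≤ α/(4(2−α))`, then
`‖ẑ_{Sᶜ}‖_∞ ≤ 1 − α/2 < 1`.  Here the `S`- and `Sᶜ`-blocks of the vectors are
represented as vectors indexed by `Fin m` and `Fin l` respectively. -/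
theorem stmt_14 {l m : ℕ} (A : Matrix (Fin l) (Fin m) ℝ)
    (zS WS RS : Fin m → ℝ) (zSc WSc RSc : Fin l → ℝ)
    (α lam : ℝ) (hα : α ∈ Set.Ioc (0 : ℝ) 1) (hlam : 0 < lam)
    (hdecomp : lam • zSc = WSc - RSc - A.mulVec (WS - RS) + lam • A.mulVec zS)
    (hA : linftyNorm A ≤ 1 - α)
    (hzS : ∀ j, |zS j| ≤ 1)
    (hWS : ∀ j, |WS j| / lam ≤ α / (4 * (2 - α)))
    (hWSc : ∀ j, |WSc j| / lam ≤ α / (4 * (2 - α)))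
    (hRS : ∀ j, |RS j| / lam ≤ α / (4 * (2 - α)))
    (hRSc : ∀ j, |RSc j| / lam ≤ α / (4 * (2 - α))) :
    (∀ j, |zSc j| ≤ 1 - α / 2) ∧ 1 - α / 2 < 1 := by
  obtain ⟨hα0, hα1⟩ := hα
  have h2α : (0:ℝ) < 2 - α := by linarith
  set ε := α / (4 * (2 - α)) with hε
  have hε0 : 0 ≤ ε := by positivity
  have hrow : ∀ j, ∑ k, |A j k| ≤ 1 - α := by
    intro j
    unfold linftyNorm at hA
    exact le_trans (le_ciSup (Set.Finite.bddAbove (Set.finite_range fun i => ∑ k, |A i k|)) j) hA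
  refine ⟨fun j => ?_, by linarith⟩
  have hrow0 : 0 ≤ (1:ℝ) - α := by linarith
  -- bound on |WS k - RS k|
  have hWR : ∀ k, |WS k - RS k| ≤ 2 * ε * lam := by
    intro k
    have h1 : |WS k| ≤ ε * lam := by
      have := hWS k; rw [div_le_iff₀ hlam] at this; linarith
    have h2 : |RS k| ≤ ε * lam := by
      have := hRS k; rw [div_le_iff₀ hlam] at this; linarith
    calc |WS k - RS k| ≤ |WS k| + |RS k| := abs_sub _ _
      _ ≤ 2 * ε * lam := by linarith
  have hb1 : |A.mulVec (WS - RS) j| ≤ (1 - α) * (2 * ε * lam) := by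
    have := mulVec_abs_le A (WS - RS) (2 * ε * lam) (by positivity) hWR j
    calc |A.mulVec (WS - RS) j| ≤ (∑ k, |A j k|) * (2 * ε * lam) := this
      _ ≤ (1 - α) * (2 * ε * lam) :=
        mul_le_mul_of_nonneg_right (hrow j) (by positivity)
  have hb2 : |A.mulVec zS j| ≤ 1 - α := by
    have := mulVec_abs_le A zS 1 zero_le_one hzS j
    calc |A.mulVec zS j| ≤ (∑ k, |A j k|) * 1 := this
      _ = ∑ k, |A j k| := mul_one _
      _ ≤ 1 - α := hrow j
  have hWScj : |WSc j| ≤ ε * lam := by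
    have := hWSc j; rw [div_le_iff₀ hlam] at this; linarith
  have hRScj : |RSc j| ≤ ε * lam := by
    have := hRSc j; rw [div_le_iff₀ hlam] at this; linarith
  have hj : lam * zSc j = WSc j - RSc j - A.mulVec (WS - RS) j + lam * A.mulVec zS j := by
    have := congrFun hdecomp j
    simpa using this
  have key : |lam * zSc j| ≤ ε * lam + ε * lam + (1 - α) * (2 * ε * lam) + lam * (1 - α) := by
    rw [hj]
    have h4 : |lam * A.mulVec zS j| ≤ lam * (1 - α) := by
      rw [abs_mul, abs_of_pos hlam]
      exact mul_le_mul_of_nonneg_left hb2 hlam.le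
    calc |WSc j - RSc j - A.mulVec (WS - RS) j + lam * A.mulVec zS j|
        ≤ |WSc j - RSc j - A.mulVec (WS - RS) j| + |lam * A.mulVec zS j| := abs_add_le _ _
      _ ≤ |WSc j - RSc j| + |A.mulVec (WS - RS) j| + |lam * A.mulVec zS j| := by
          have := abs_sub (WSc j - RSc j) (A.mulVec (WS - RS) j); linarith
      _ ≤ |WSc j| + |RSc j| + |A.mulVec (WS - RS) j| + |lam * A.mulVec zS j| := by
          have := abs_sub (WSc j) (RSc j); linarith
      _ ≤ ε * lam + ε * lam + (1 - α) * (2 * ε * lam) + lam * (1 - α) := by linarith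
  rw [abs_mul, abs_of_pos hlam] at key
  -- ε * (2 + 2*(1-α)) = ε * 2 * (2 - α) = α/2
  have hεeq : ε * (2 * (2 - α)) = α / 2 := by
    rw [hε, div_mul_eq_mul_div, div_eq_div_iff (by positivity) (by norm_num)]
    ring
  have : lam * |zSc j| ≤ lam * (1 - α / 2) := by nlinarith
  exact le_of_mul_le_mul_left this hlam
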